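/- In an imbrex geometry, all symplecta have the same polar rank. -/

import Mathlib

namespace ImbrexGeom

variable {P : Type*}

/-- Two points are collinear: equal or on a common line. -/
def Col (Ls : Set (Set P)) (x y : P) : Prop :=
  x = y ∨ ∃ L ∈ Ls, x ∈ L ∧ y ∈ L

/-- A line of the geometry induced on a subset `S`. -/
def LineIn (Ls : Set (Set P)) (S : Set P) (L : Set P) : Prop :=
  L ∈ Ls ∧ L ⊆ S

/-- Collinearity inside the geometry induced on `S`. -/
def ColIn (Ls : Set (Set P)) (S : Set P) (x y : P) : Prop :=
  x = y ∨ ∃ L, LineIn Ls S L ∧ x ∈ L ∧ y ∈ L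

/-- A subspace of the geometry induced on `S`. -/
def IsSubspaceIn (Ls : Set (Set P)) (S T : Set P) : Prop :=
  T ⊆ S ∧ ∀ L, LineIn Ls S L → ∀ x ∈ L, ∀ y ∈ L, x ≠ y → x ∈ T → y ∈ T → L ⊆ T

def IsSubspace (Ls : Set (Set P)) (T : Set P) : Prop :=
  IsSubspaceIn Ls Set.univ T

/-- A convex subspace (adapted to diameter 2): closed under taking common
neighbours of non-collinear pairs, i.e. all points on shortest paths. -/
def IsConvex (Ls : Set (Set P)) (S : Set P) : Prop :=
  IsSubspace Ls S ∧ ∀ x ∈ S, ∀ y ∈ S, ¬ Col Ls x y →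
    ∀ z, Col Ls x z → Col Ls z y → z ∈ S

/-- `S` is the smallest convex subspace containing `x` and `y`. -/
def SmallestConvex (Ls : Set (Set P)) (x y : P) (S : Set P) : Prop :=
  IsConvex Ls S ∧ x ∈ S ∧ y ∈ S ∧
    ∀ S', IsConvex Ls S' → x ∈ S' → y ∈ S' → S ⊆ S'

/-- A singular subspace of the geometry induced on `S`. -/
def IsSingularIn (Ls : Set (Set P)) (S T : Set P) : Prop :=
  IsSubspaceIn Ls S T ∧ ∀ x ∈ T, ∀ y ∈ T, ColIn Ls S x y

def IsSingular (Ls : Set (Set P)) (T : Set P) : Prop :=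
  IsSingularIn Ls Set.univ T

/-- A maximal singular subspace of the geometry induced on `S`. -/
def MaxSingularIn (Ls : Set (Set P)) (S T : Set P) : Prop :=
  IsSingularIn Ls S T ∧ ∀ T', IsSingularIn Ls S T' → T ⊆ T' → T' = T

/-- A block: a maximal singular subspace of the whole geometry. -/
def IsBlock (Ls : Set (Set P)) (B : Set P) : Prop :=
  MaxSingularIn Ls Set.univ B

/-- The geometry induced on `S` has polar rank `r`: every nested (strictly
increasing) sequence of singular subspaces has length at most `r + 1`, and
one of length `r + 1` exists. -/
def HasPolarRank (Ls : Set (Set P)) (S : Set P) (r : ℕ) : Prop :=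
  (∀ n : ℕ, ∀ f : Fin n → Set P, (∀ i, IsSingularIn Ls S (f i)) →
      (∀ i j, i < j → f i ⊂ f j) → n ≤ r + 1) ∧
  ∃ f : Fin (r + 1) → Set P, (∀ i, IsSingularIn Ls S (f i)) ∧
      ∀ i j : Fin (r + 1), i < j → f i ⊂ f j

/-- The geometry induced on `S` is a polar space of rank `r`
(Buekenhout–Shult axioms). -/
def IsPolarSpace (Ls : Set (Set P)) (S : Set P) (r : ℕ) : Prop :=
  (∀ L, LineIn Ls S L → ∃ x ∈ L, ∃ y ∈ L, ∃ z ∈ L, x ≠ y ∧ x ≠ z ∧ y ≠ z) ∧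
  (∀ x ∈ S, ∃ y ∈ S, ¬ ColIn Ls S x y) ∧
  HasPolarRank Ls S r ∧
  (∀ x ∈ S, ∀ L, LineIn Ls S L → x ∉ L →
      (∃! y, y ∈ L ∧ ColIn Ls S x y) ∨ ∀ y ∈ L, ColIn Ls S x y)

/-- A strong parapolar space of diameter 2. -/
structure StrongParapolar2 (Ls : Set (Set P)) : Prop where
  connected : ∀ x y : P, Relation.ReflTransGen (Col Ls) x y
  pps1 : ∀ x : P, ∀ L ∈ Ls, x ∉ L →
      (∀ y ∈ L, ¬ Col Ls x y) ∨ (∃! y, y ∈ L ∧ Col Ls x y) ∨ ∀ y ∈ L, Col Ls x y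
  pps1_none : ∃ x : P, ∃ L ∈ Ls, ∀ y ∈ L, ¬ Col Ls x y
  pps1_one : ∃ x : P, ∃ L ∈ Ls, x ∉ L ∧ ∃! y, y ∈ L ∧ Col Ls x y
  pps1_all : ∃ x : P, ∃ L ∈ Ls, x ∉ L ∧ ∀ y ∈ L, Col Ls x y
  pps2 : ∀ x y : P, ¬ Col Ls x y →
      ∃ S, SmallestConvex Ls x y S ∧ ∃ r, 2 ≤ r ∧ IsPolarSpace Ls S r

/-- A symplecton: the smallest convex subspace of a non-collinear pair. -/
def IsSymp (Ls : Set (Set P)) (S : Set P) : Prop :=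
  ∃ x y, ¬ Col Ls x y ∧ SmallestConvex Ls x y S

/-- (PPS4): every nested sequence of singular subspaces has finite length. -/
def PPS4 (Ls : Set (Set P)) : Prop :=
  ∀ f : ℕ → Set P, (∀ n, IsSingular Ls (f n)) → ¬ ∀ n, f n ⊂ f (n + 1)

/-- The imbrex axiom (Imb). -/
def Imb (Ls : Set (Set P)) : Prop :=
  ∀ x : P, ∀ L ∈ Ls, (∀ y ∈ L, ¬ Col Ls x y) →
    ∀ y₁ ∈ L, ∀ y₂ ∈ L, y₁ ≠ y₂ →
      ∀ S₁ S₂, SmallestConvex Ls x y₁ S₁ → SmallestConvex Ls x y₂ S₂ →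
        MaxSingularIn Ls S₁ (S₁ ∩ S₂) ∧ MaxSingularIn Ls S₂ (S₁ ∩ S₂)

/-- An imbrex geometry. -/
structure ImbrexGeometry (Ls : Set (Set P)) : Prop where
  spp : StrongParapolar2 Ls
  pps4 : PPS4 Ls
  imb : Imb Ls

/-- The geometry has symplectic rank `r`: all symplecta have polar rank `r`. -/
def SympRank (Ls : Set (Set P)) (r : ℕ) : Prop :=
  ∀ S, IsSymp Ls S → HasPolarRank Ls S r

/-- All symplecta are thick generalized quadrangles: every point of a
symplecton lies on at least three lines of it (lines already have at least
three points by the polar space axioms). -/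
def ThickSymps (Ls : Set (Set P)) : Prop :=
  ∀ S, IsSymp Ls S → ∀ x ∈ S, ∃ L₁ L₂ L₃, LineIn Ls S L₁ ∧ LineIn Ls S L₂ ∧
    LineIn Ls S L₃ ∧ L₁ ≠ L₂ ∧ L₁ ≠ L₃ ∧ L₂ ≠ L₃ ∧ x ∈ L₁ ∧ x ∈ L₂ ∧ x ∈ L₃

/-- The perp of a set of lines in the geometry induced on `S`: all lines of
`S` concurrent with every member of the set. -/
def PerpSet (Ls : Set (Set P)) (S : Set P) (T : Set (Set P)) : Set (Set P) :=
  {N | LineIn Ls S N ∧ ∀ M ∈ T, (N ∩ M).Nonempty}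

/-- A pair of lines is regular. -/
def RegularPair (Ls : Set (Set P)) (S : Set P) (L M : Set P) : Prop :=
  ∃ L' M', L' ∈ PerpSet Ls S {L, M} ∧ M' ∈ PerpSet Ls S {L, M} ∧ L' ≠ M' ∧
    PerpSet Ls S (PerpSet Ls S {L, M}) = PerpSet Ls S {L', M'}

/-- `N` is a member of the spread of the symplecton `H` induced by the
block `B`: `N = B' ∩ H` for some block `B'` meeting `B`. -/
def InSpreadOf (Ls : Set (Set P)) (H B : Set P) (N : Set P) : Prop :=
  ∃ B', IsBlock Ls B' ∧ (B' ∩ B).Nonempty ∧ N = B' ∩ H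


/-! ### Basic lemmas -/

variable {Ls : Set (Set P)}

lemma col_refl (Ls : Set (Set P)) (x : P) : Col Ls x x := Or.inl rfl

lemma col_symm {x y : P} (h : Col Ls x y) : Col Ls y x := by
  rcases h with h | ⟨L, hL, hx, hy⟩
  · exact Or.inl h.symm
  · exact Or.inr ⟨L, hL, hy, hx⟩

lemma colIn_to_col {S : Set P} {x y : P} (h : ColIn Ls S x y) : Col Ls x y := by
  rcases h with h | ⟨L, hL, hx, hy⟩
  · exact Or.inl h
  · exact Or.inr ⟨L, hL.1, hx, hy⟩

/-- In a subspace, global collinearity implies internal collinearity. -/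
lemma col_to_colIn {S : Set P} (hS : IsSubspace Ls S) {x y : P}
    (hx : x ∈ S) (hy : y ∈ S) (h : Col Ls x y) : ColIn Ls S x y := by
  rcases h with h | ⟨L, hL, hxL, hyL⟩
  · exact Or.inl h
  · by_cases hxy : x = y
    · exact Or.inl hxy
    · have hLS : L ⊆ S := hS.2 L ⟨hL, Set.subset_univ L⟩ x hxL y hyL hxy hx hy
      exact Or.inr ⟨L, ⟨hL, hLS⟩, hxL, hyL⟩

lemma line_subset_of_subspace {S : Set P} (hS : IsSubspace Ls S) {L : Set P}
    (hL : L ∈ Ls) {x y : P} (hxL : x ∈ L) (hyL : y ∈ L) (hxy : x ≠ y)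
    (hx : x ∈ S) (hy : y ∈ S) : L ⊆ S :=
  hS.2 L ⟨hL, Set.subset_univ L⟩ x hxL y hyL hxy hx hy

/-- The "gamma space" property: a point collinear with two distinct points of a
line is collinear with every point of that line. -/
lemma gamma (hs : StrongParapolar2 Ls) {d x y : P} {L : Set P} (hL : L ∈ Ls)
    (hxL : x ∈ L) (hyL : y ∈ L) (hxy : x ≠ y)
    (hdx : Col Ls d x) (hdy : Col Ls d y) : ∀ w ∈ L, Col Ls d w := by
  intro w hw
  by_cases hdL : d ∈ L
  · exact Or.inr ⟨L, hL, hdL, hw⟩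
  · rcases hs.pps1 d L hL hdL with hnone | hone | hall
    · exact absurd hdx (hnone x hxL)
    · obtain ⟨z, _, hz⟩ := hone
      have h1 : x = z := hz x ⟨hxL, hdx⟩
      have h2 : y = z := hz y ⟨hyL, hdy⟩
      exact absurd (h1.trans h2.symm) hxy
    · exact hall w hw

/-- The smallest convex subspace containing a pair is unique. -/
lemma smallestConvex_unique {x y : P} {S S' : Set P}
    (h : SmallestConvex Ls x y S) (h' : SmallestConvex Ls x y S') : S = S' :=
  Set.Subset.antisymm (h.2.2.2 S' h'.1 h'.2.1 h'.2.2.1)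
    (h'.2.2.2 S h.1 h.2.1 h.2.2.1)

/-- Polar rank is unique. -/
lemma hasPolarRank_unique {S : Set P} {r r' : ℕ}
    (h : HasPolarRank Ls S r) (h' : HasPolarRank Ls S r') : r = r' := by
  obtain ⟨f, hf1, hf2⟩ := h'.2
  have h1 : r' + 1 ≤ r + 1 := h.1 (r' + 1) f hf1 hf2
  obtain ⟨g, hg1, hg2⟩ := h.2
  have h2 : r + 1 ≤ r' + 1 := h'.1 (r + 1) g hg1 hg2
  omega

/-! ### Symplecta basics -/

/-- Every symplecton carries a polar space structure of some rank `≥ 2`,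
and is the smallest convex subspace of one of its non-collinear pairs. -/
lemma symp_spec (hs : StrongParapolar2 Ls) {C : Set P} (hC : IsSymp Ls C) :
    ∃ a b, ¬ Col Ls a b ∧ SmallestConvex Ls a b C ∧
      ∃ s, 2 ≤ s ∧ IsPolarSpace Ls C s := by
  obtain ⟨a, b, hab, hsc⟩ := hC
  obtain ⟨S, hS, s, hs2, hPS⟩ := hs.pps2 a b hab
  have : S = C := smallestConvex_unique hS hsc
  exact ⟨a, b, hab, hsc, s, hs2, this ▸ hPS⟩

lemma symp_convex {C : Set P} (hC : IsSymp Ls C) : IsConvex Ls C := by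
  obtain ⟨a, b, hab, hsc⟩ := hC; exact hsc.1

lemma symp_subspace {C : Set P} (hC : IsSymp Ls C) : IsSubspace Ls C :=
  (symp_convex hC).1

/-- For points of a symplecton, internal and global collinearity agree. -/
lemma symp_colIn_iff {C : Set P} (hC : IsSymp Ls C) {x y : P}
    (hx : x ∈ C) (hy : y ∈ C) : ColIn Ls C x y ↔ Col Ls x y :=
  ⟨colIn_to_col, col_to_colIn (symp_subspace hC) hx hy⟩

/-- A symplecton contains a line. -/
lemma symp_has_line (hs : StrongParapolar2 Ls) {C : Set P} {s : ℕ}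
    (hPS : IsPolarSpace Ls C s) (hs2 : 2 ≤ s) :
    ∃ L, LineIn Ls C L := by
  obtain ⟨f, hf1, hf2⟩ := hPS.2.2.1.2
  have h01 : (⟨0, by omega⟩ : Fin (s+1)) < ⟨1, by omega⟩ := by
    simp [Fin.lt_def]
  have h12 : (⟨1, by omega⟩ : Fin (s+1)) < ⟨2, by omega⟩ := by
    simp [Fin.lt_def]
  obtain ⟨a, ha, hna⟩ := Set.exists_of_ssubset (hf2 _ _ h01)
  obtain ⟨b, hb, hnb⟩ := Set.exists_of_ssubset (hf2 _ _ h12)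
  have hab : a ≠ b := fun h => hnb (h ▸ ha)
  have haf : a ∈ f ⟨2, by omega⟩ := (hf2 _ _ h12).1 ha
  have hcol := (hf1 ⟨2, by omega⟩).2 a haf b hb
  rcases hcol with h | ⟨L, hL, _, _⟩
  · exact absurd h hab
  · exact ⟨L, hL⟩

/-- Every point of a symplecton lies on a line of the symplecton. -/
lemma symp_pt_on_line (hs : StrongParapolar2 Ls) {C : Set P} {s : ℕ}
    (hC : IsSymp Ls C) (hPS : IsPolarSpace Ls C s) (hs2 : 2 ≤ s) {x : P}
    (hx : x ∈ C) : ∃ M, LineIn Ls C M ∧ x ∈ M := by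
  obtain ⟨L, hL⟩ := symp_has_line hs hPS hs2
  by_cases hxL : x ∈ L
  · exact ⟨L, hL, hxL⟩
  · rcases hPS.2.2.2 x hx L hL hxL with ⟨y, ⟨hyL, hy⟩, _⟩ | hall
    · rcases hy with h | ⟨M, hM, hxM, _⟩
      · exact absurd (h ▸ hyL) hxL
      · exact ⟨M, hM, hxM⟩
    · obtain ⟨z, hz, _⟩ := hPS.1 L hL
      rcases hall z hz with h | ⟨M, hM, hxM, _⟩
      · exact absurd (h ▸ hz) hxL
      · exact ⟨M, hM, hxM⟩

/-- Inside a symplecton there is no point "far" from a line: every point is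
collinear with at least one point of every line (Buekenhout–Shult). -/
lemma symp_no_far (hs : StrongParapolar2 Ls) {C : Set P} {s : ℕ}
    (hPS : IsPolarSpace Ls C s) {x : P} (hx : x ∈ C) {L : Set P}
    (hL : LineIn Ls C L) : ∃ w ∈ L, Col Ls x w := by
  by_cases hxL : x ∈ L
  · exact ⟨x, hxL, col_refl Ls x⟩
  · rcases hPS.2.2.2 x hx L hL hxL with ⟨y, ⟨hyL, hy⟩, _⟩ | hall
    · exact ⟨y, hyL, colIn_to_col hy⟩
    · obtain ⟨z, hz, _⟩ := hPS.1 L hL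
      exact ⟨z, hz, colIn_to_col (hall z hz)⟩

/-! ### Spans of cliques -/

/-- The subspace of `S` spanned by a set `X`. -/
def SpanIn (Ls : Set (Set P)) (S X : Set P) : Set P :=
  ⋂₀ {T | IsSubspaceIn Ls S T ∧ X ⊆ T}

lemma subset_spanIn {S X : Set P} : X ⊆ SpanIn Ls S X :=
  fun x hx => fun T hT => hT.2 hx

lemma spanIn_min {S X T : Set P} (hT : IsSubspaceIn Ls S T) (hXT : X ⊆ T) :
    SpanIn Ls S X ⊆ T := fun z hz => hz T ⟨hT, hXT⟩

lemma spanIn_subspace {S X : Set P} (hXS : X ⊆ S) :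
    IsSubspaceIn Ls S (SpanIn Ls S X) := by
  constructor
  · intro z hz
    exact hz S ⟨⟨le_refl S, fun L hL _ _ _ _ _ _ _ => hL.2⟩, hXS⟩
  · intro L hL x hxL y hyL hxy hx hy
    intro w hw T hT
    exact hT.1.2 L hL x hxL y hyL hxy (hx T hT) (hy T hT) hw

/-- The span (inside a symplecton) of a set of pairwise collinear points is
again pairwise collinear. -/
lemma spanIn_clique (hs : StrongParapolar2 Ls) {C X : Set P}
    (hC : IsSymp Ls C) (hXC : X ⊆ C)
    (hX : ∀ x ∈ X, ∀ y ∈ X, Col Ls x y) :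
    ∀ u ∈ SpanIn Ls C X, ∀ v ∈ SpanIn Ls C X, Col Ls u v := by
  -- step 1 : every element of the span is collinear with every element of X
  have hT1 : IsSubspaceIn Ls C {p ∈ C | ∀ x ∈ X, Col Ls p x} := by
    constructor
    · exact fun p hp => hp.1
    · intro L hL u huL v hvL huv hu hv w hw
      refine ⟨hL.2 hw, fun x hx => ?_⟩
      exact col_symm (gamma hs hL.1 huL hvL huv (col_symm (hu.2 x hx))
        (col_symm (hv.2 x hx)) w hw)
  have hXT1 : X ⊆ {p ∈ C | ∀ x ∈ X, Col Ls p x} :=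
    fun x hx => ⟨hXC hx, fun x' hx' => hX x hx x' hx'⟩
  have hstep1 : SpanIn Ls C X ⊆ {p ∈ C | ∀ x ∈ X, Col Ls p x} :=
    spanIn_min hT1 hXT1
  -- step 2 : every element of the span is collinear with the whole span
  have hT2 : IsSubspaceIn Ls C {p ∈ C | ∀ w ∈ SpanIn Ls C X, Col Ls p w} := by
    constructor
    · exact fun p hp => hp.1
    · intro L hL u huL v hvL huv hu hv w hw
      refine ⟨hL.2 hw, fun z hz => ?_⟩
      exact col_symm (gamma hs hL.1 huL hvL huv (col_symm (hu.2 z hz))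
        (col_symm (hv.2 z hz)) w hw)
  have hXT2 : X ⊆ {p ∈ C | ∀ w ∈ SpanIn Ls C X, Col Ls p w} := by
    intro x hx
    exact ⟨hXC hx, fun w hw => col_symm ((hstep1 hw).2 x hx)⟩
  intro u hu v hv
  exact (spanIn_min hT2 hXT2 hu).2 v hv

/-- The span of a clique inside a symplecton is a singular subspace. -/
lemma spanIn_singular (hs : StrongParapolar2 Ls) {C X : Set P}
    (hC : IsSymp Ls C) (hXC : X ⊆ C)
    (hX : ∀ x ∈ X, ∀ y ∈ X, Col Ls x y) :
    IsSingularIn Ls C (SpanIn Ls C X) := by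
  refine ⟨spanIn_subspace hXC, fun u hu v hv => ?_⟩
  have hcol := spanIn_clique hs hC hXC hX u hu v hv
  exact col_to_colIn (symp_subspace hC) ((spanIn_subspace hXC).1 hu)
    ((spanIn_subspace hXC).1 hv) hcol

/-- A subset of a singular subspace consisting of two points is collinear. -/
lemma singular_col {C T : Set P} (hT : IsSingularIn Ls C T) {u v : P}
    (hu : u ∈ T) (hv : v ∈ T) : Col Ls u v :=
  colIn_to_col (hT.2 u hu v hv)

lemma singular_inter {C T T' : Set P} (hT : IsSingularIn Ls C T)
    (hT' : IsSingularIn Ls C T') : IsSingularIn Ls C (T ∩ T') := by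
  refine ⟨⟨fun x hx => hT.1.1 hx.1, ?_⟩, fun u hu v hv => hT.2 u hu.1 v hv.1⟩
  intro L hL x hxL y hyL hxy hx hy
  exact Set.subset_inter (hT.1.2 L hL x hxL y hyL hxy hx.1 hy.1)
    (hT'.1.2 L hL x hxL y hyL hxy hx.2 hy.2)

/-! ### Chains of singular subspaces and heights -/

/-- There is a strictly increasing chain of `n` singular subspaces of `S`,
all contained in `T`. -/
def ChainLE (Ls : Set (Set P)) (S T : Set P) (n : ℕ) : Prop :=
  ∃ f : ℕ → Set P, (∀ i, i < n → IsSingularIn Ls S (f i) ∧ f i ⊆ T) ∧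
    ∀ i j, i < j → j < n → f i ⊂ f j

lemma chainLE_zero (Ls : Set (Set P)) (S T : Set P) : ChainLE Ls S T 0 :=
  ⟨fun _ => ∅, fun i hi => absurd hi (by omega), fun i j _ hj => absurd hj (by omega)⟩

lemma chainLE_mono_n {S T : Set P} {m n : ℕ} (hmn : m ≤ n)
    (h : ChainLE Ls S T n) : ChainLE Ls S T m := by
  obtain ⟨f, h1, h2⟩ := h
  exact ⟨f, fun i hi => h1 i (by omega), fun i j hij hj => h2 i j hij (by omega)⟩

lemma chainLE_mono_T {S T T' : Set P} {n : ℕ} (hT : T ⊆ T')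
    (h : ChainLE Ls S T n) : ChainLE Ls S T' n := by
  obtain ⟨f, h1, h2⟩ := h
  exact ⟨f, fun i hi => ⟨(h1 i hi).1, (h1 i hi).2.trans hT⟩, h2⟩

lemma chainLE_bound {S T : Set P} {s n : ℕ} (hrank : HasPolarRank Ls S s)
    (h : ChainLE Ls S T n) : n ≤ s + 1 := by
  obtain ⟨f, h1, h2⟩ := h
  exact hrank.1 n (fun i => f i.1) (fun i => (h1 i.1 i.2).1)
    (fun i j hij => h2 i.1 j.1 hij j.2)

lemma chainLE_snoc {S T T' : Set P} {n : ℕ} (h : ChainLE Ls S T n)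
    (hTT' : T ⊂ T') (hT' : IsSingularIn Ls S T') : ChainLE Ls S T' (n + 1) := by
  obtain ⟨f, h1, h2⟩ := h
  refine ⟨fun i => if i < n then f i else T', fun i hi => ?_, fun i j hij hj => ?_⟩
  · by_cases hin : i < n
    · simp only [hin, if_pos]
      exact ⟨(h1 i hin).1, (h1 i hin).2.trans hTT'.subset⟩
    · simp only [hin, if_neg, if_false]
      exact ⟨hT', le_refl T'⟩
  · by_cases hjn : j < n
    · have hin : i < n := by omega
      simpa only [hin, hjn, if_pos] using h2 i j hij hjn
    · have hin : i < n := by omega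
      simp only [hin, hjn, if_pos, if_neg, if_false]
      exact ssubset_of_subset_of_ssubset (h1 i hin).2 hTT'

lemma hasPolarRank_chain {S : Set P} {s : ℕ} (hrank : HasPolarRank Ls S s) :
    ∃ T, IsSingularIn Ls S T ∧ ChainLE Ls S T (s + 1) := by
  obtain ⟨f, h1, h2⟩ := hrank.2
  refine ⟨f ⟨s, by omega⟩, h1 _,
    fun i => if h : i < s + 1 then f ⟨i, h⟩ else ∅, fun i hi => ?_, fun i j hij hj => ?_⟩
  · simp only [hi, dif_pos]
    refine ⟨h1 _, ?_⟩
    rcases Nat.lt_or_ge i s with his | his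
    · exact (h2 ⟨i, hi⟩ ⟨s, by omega⟩ (by simpa [Fin.lt_def] using his)).subset
    · have : i = s := by omega
      subst this; exact le_refl _
  · have hi : i < s + 1 := by omega
    simp only [hi, hj, dif_pos]
    exact h2 ⟨i, hi⟩ ⟨j, hj⟩ (by simpa [Fin.lt_def] using hij)

/-- Height of `T` within the geometry on `S`: greatest length of a chain of
singular subspaces of `S` contained in `T`, capped at `s + 1`. -/
noncomputable def ht (Ls : Set (Set P)) (S T : Set P) (s : ℕ) : ℕ :=
  @Nat.findGreatest (fun n => ChainLE Ls S T n) (Classical.decPred _) (s + 1)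

lemma ht_spec {S T : Set P} (s : ℕ) : ChainLE Ls S T (ht Ls S T s) :=
  @Nat.findGreatest_spec 0 (fun n => ChainLE Ls S T n) (Classical.decPred _) _
    (Nat.zero_le _) (chainLE_zero Ls S T)

lemma le_ht {S T : Set P} {s m : ℕ} (hrank : HasPolarRank Ls S s)
    (h : ChainLE Ls S T m) : m ≤ ht Ls S T s :=
  @Nat.le_findGreatest m (fun n => ChainLE Ls S T n) (Classical.decPred _) _
    (chainLE_bound hrank h) h

lemma ht_le {S T : Set P} (s : ℕ) : ht Ls S T s ≤ s + 1 :=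
  @Nat.findGreatest_le (fun n => ChainLE Ls S T n) (Classical.decPred _) _

lemma ht_mono {S T T' : Set P} {s : ℕ} (hrank : HasPolarRank Ls S s)
    (hT : T ⊆ T') : ht Ls S T s ≤ ht Ls S T' s :=
  le_ht hrank (chainLE_mono_T hT (ht_spec s))

lemma ht_lt {S T T' : Set P} {s : ℕ} (hrank : HasPolarRank Ls S s)
    (hTT' : T ⊂ T') (hT' : IsSingularIn Ls S T') :
    ht Ls S T s < ht Ls S T' s :=
  lt_of_lt_of_le (Nat.lt_succ_self _)
    (le_ht hrank (chainLE_snoc (ht_spec s) hTT' hT'))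

/-- Every singular subspace is contained in a maximal one. -/
lemma exists_max_singular {S : Set P} {s : ℕ} (hrank : HasPolarRank Ls S s)
    {T : Set P} (hT : IsSingularIn Ls S T) :
    ∃ N, MaxSingularIn Ls S N ∧ T ⊆ N := by
  suffices h : ∀ k (T : Set P), IsSingularIn Ls S T → s + 1 ≤ ht Ls S T s + k →
      ∃ N, MaxSingularIn Ls S N ∧ T ⊆ N by
    exact h (s + 1) T hT (by omega)
  intro k
  induction k with
  | zero =>
    intro T hT hk
    refine ⟨T, ⟨hT, fun T' hT' hTT' => ?_⟩, le_refl T⟩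
    by_contra hne
    have hss : T ⊂ T' := ssubset_of_subset_of_ne hTT' (Ne.symm hne)
    have := chainLE_bound hrank (ht_spec (T := T') s)
    have := ht_lt hrank hss hT'
    omega
  | succ k ih =>
    intro T hT hk
    by_cases hmax : ∃ T', IsSingularIn Ls S T' ∧ T ⊂ T'
    · obtain ⟨T', hT', hss⟩ := hmax
      have := ht_lt hrank hss hT'
      obtain ⟨N, hN, hTN⟩ := ih T' hT' (by omega)
      exact ⟨N, hN, hss.subset.trans hTN⟩
    · refine ⟨T, ⟨hT, fun T' hT' hTT' => ?_⟩, le_refl T⟩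
      by_contra hne
      exact hmax ⟨T', hT', ssubset_of_subset_of_ne hTT' (Ne.symm hne)⟩

/-! ### The hyperplane height lemma and purity -/

lemma consec_chain {g : ℕ → Set P} {m : ℕ}
    (h : ∀ i, i + 1 < m → g i ⊂ g (i + 1)) :
    ∀ i j, i < j → j < m → g i ⊂ g j := by
  intro i j hij
  induction j, hij using Nat.le_induction with
  | base => exact fun hm => h i hm
  | succ j hj ihj =>
    intro hm
    rcases Nat.lt_or_ge i j with hij' | hij'
    · exact (ihj (by omega)).trans (h j hm)
    · have : i = j := by omega
      subst this; exact h i hm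

lemma singular_inter_subspace {C T U : Set P} (hT : IsSingularIn Ls C T)
    (hU : IsSubspaceIn Ls C U) : IsSingularIn Ls C (T ∩ U) := by
  refine ⟨⟨fun x hx => hT.1.1 hx.1, ?_⟩, fun u hu v hv => hT.2 u hu.1 v hv.1⟩
  intro L hL x hxL y hyL hxy hx hy
  exact Set.subset_inter (hT.1.2 L hL x hxL y hyL hxy hx.1 hy.1)
    (hU.2 L hL x hxL y hyL hxy hx.2 hy.2)

/-- Hyperplane height lemma: if `Hp ⊆ N` is a subspace meeting every line
of `N`, then the height of `N` exceeds that of `Hp` by at most one. -/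
lemma hyperplane_ht {C : Set P} {s : ℕ} (hrank : HasPolarRank Ls C s)
    {N Hp : Set P} (hHpN : Hp ⊆ N) (hHp : IsSubspaceIn Ls C Hp)
    (hmeet : ∀ L, LineIn Ls C L → L ⊆ N → ∃ w ∈ L, w ∈ Hp) :
    ht Ls C N s ≤ ht Ls C Hp s + 1 := by
  set n := ht Ls C N s with hn
  obtain ⟨f, h1, h2⟩ := ht_spec (Ls := Ls) (S := C) (T := N) s
  set g : ℕ → Set P := fun i => f i ∩ Hp with hg
  have hfmono : ∀ a b, a ≤ b → b < n → f a ⊆ f b := by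
    intro a b hab hb
    rcases Nat.lt_or_ge a b with h | h
    · exact (h2 a b h hb).subset
    · have : a = b := by omega
      subst this; exact le_refl _
  have hgsing : ∀ i, i < n → IsSingularIn Ls C (g i) ∧ g i ⊆ Hp :=
    fun i hi => ⟨singular_inter_subspace (h1 i hi).1 hHp, Set.inter_subset_right⟩
  have hgmono : ∀ a b, a ≤ b → b < n → g a ⊆ g b :=
    fun a b hab hb => Set.inter_subset_inter_left _ (hfmono a b hab hb)
  -- at most one "stall"
  have hstall : ∀ i j, i + 1 < n → j + 1 < n → i < j →
      g i = g (i + 1) → g j = g (j + 1) → False := by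
    intro i j hi hj hij hgi hgj
    obtain ⟨u, hu1, hu2⟩ := Set.exists_of_ssubset (h2 i (i + 1) (by omega) hi)
    obtain ⟨v, hv1, hv2⟩ := Set.exists_of_ssubset (h2 j (j + 1) (by omega) hj)
    have huHp : u ∉ Hp := fun h => hu2 (by
      have : u ∈ g (i + 1) := ⟨hu1, h⟩
      rw [← hgi] at this; exact this.1)
    have hvHp : v ∉ Hp := fun h => hv2 (by
      have : v ∈ g (j + 1) := ⟨hv1, h⟩
      rw [← hgj] at this; exact this.1)
    have hufj : u ∈ f j := hfmono (i + 1) j (by omega) (by omega) hu1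
    have huv : u ≠ v := fun h => hv2 (h ▸ hufj)
    have hufj1 : u ∈ f (j + 1) := hfmono j (j + 1) (by omega) hj hufj
    rcases (h1 (j + 1) hj).1.2 u hufj1 v hv1 with h | ⟨L, hL, huL, hvL⟩
    · exact huv h
    · have hLfj1 : L ⊆ f (j + 1) :=
        (h1 (j + 1) hj).1.1.2 L hL u huL v hvL huv hufj1 hv1
      have hLN : L ⊆ N := hLfj1.trans (h1 (j + 1) hj).2
      obtain ⟨w, hwL, hwHp⟩ := hmeet L hL hLN
      have hwgj : w ∈ g j := by
        rw [hgj]; exact ⟨hLfj1 hwL, hwHp⟩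
      have hwu : w ≠ u := fun h => huHp (h ▸ hwHp)
      have hLfj : L ⊆ f j :=
        (h1 j (by omega)).1.1.2 L hL w hwL u huL hwu hwgj.1 hufj
      exact hv2 (hLfj hvL)
  rcases Nat.lt_or_ge n 2 with hn2 | hn2
  · have : (0:ℕ) ≤ ht Ls C Hp s := Nat.zero_le _
    omega
  by_cases hex : ∃ i, i + 1 < n ∧ g i = g (i + 1)
  · obtain ⟨i0, hi0, heq0⟩ := hex
    set h : ℕ → Set P := fun j => if j < i0 + 1 then g j else g (j + 1) with hh
    have hidx : ∀ a, a < n - 1 → ∃ b, b < n ∧ h a = g b ∧ b < n := by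
      intro a ha
      by_cases hai : a < i0 + 1
      · exact ⟨a, by omega, by simp only [hh]; exact if_pos hai, by omega⟩
      · exact ⟨a + 1, by omega, by simp only [hh]; exact if_neg hai, by omega⟩
    have hconsec : ∀ a, a + 1 < n - 1 → h a ⊂ h (a + 1) := by
      intro a ha
      rcases Nat.lt_or_ge (a + 1) (i0 + 1) with h1' | h1'
      · have ha' : a < i0 + 1 := by omega
        simp only [hh, h1', ha', if_pos]
        refine ssubset_of_subset_of_ne (hgmono a (a + 1) (by omega) (by omega)) ?_
        intro heq
        exact hstall a i0 (by omega) hi0 (by omega) heq heq0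
      · rcases Nat.lt_or_ge a (i0 + 1) with h2' | h2'
        · have hai0 : a = i0 := by omega
          subst hai0
          simp only [hh, h2', if_pos, if_neg (by omega : ¬ a + 1 < a + 1)]
          rw [heq0]
          refine ssubset_of_subset_of_ne (hgmono (a + 1) (a + 2) (by omega) (by omega)) ?_
          intro heq
          exact hstall a (a + 1) (by omega) (by omega) (by omega) heq0 heq
        · simp only [hh, if_neg (by omega : ¬ a < i0 + 1),
            if_neg (by omega : ¬ a + 1 < i0 + 1)]
          refine ssubset_of_subset_of_ne (hgmono (a + 1) (a + 2) (by omega) (by omega)) ?_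
          intro heq
          exact hstall i0 (a + 1) hi0 (by omega) (by omega) heq0 heq
    have hchain : ChainLE Ls C Hp (n - 1) := by
      refine ⟨h, fun i hi => ?_, fun i j hij hj => consec_chain hconsec i j hij hj⟩
      obtain ⟨b, hb, hhb, _⟩ := hidx i hi
      rw [hhb]; exact hgsing b hb
    have := le_ht hrank hchain
    omega
  · push_neg at hex
    have hconsec : ∀ i, i + 1 < n → g i ⊂ g (i + 1) := by
      intro i hi
      exact ssubset_of_subset_of_ne (hgmono i (i + 1) (by omega) (by omega))
        (hex i hi)
    have hchain : ChainLE Ls C Hp n :=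
      ⟨g, hgsing, fun i j hij hj => consec_chain hconsec i j hij hj⟩
    have := le_ht hrank hchain
    omega

/-- Purity: every maximal singular subspace of a symplecton of rank `s`
carries a full chain of length `s + 1`. -/
lemma purity (hs : StrongParapolar2 Ls) {C : Set P} {s : ℕ} (hC : IsSymp Ls C)
    (hPS : IsPolarSpace Ls C s) {M : Set P} (hM : MaxSingularIn Ls C M) :
    ChainLE Ls C M (s + 1) := by
  have hrank := hPS.2.2.1
  obtain ⟨T0, hT0, hch0⟩ := hasPolarRank_chain hrank
  obtain ⟨N0, hN0, hTN0⟩ := exists_max_singular hrank hT0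
  have hchN0 : ChainLE Ls C N0 (s + 1) := chainLE_mono_T hTN0 hch0
  suffices h : ∀ k (N : Set P), MaxSingularIn Ls C N → ChainLE Ls C N (s + 1) →
      s + 1 ≤ ht Ls C (M ∩ N) s + k → ChainLE Ls C M (s + 1) by
    exact h (s + 1) N0 hN0 hchN0 (by omega)
  intro k
  induction k with
  | zero =>
    intro N hN hchN hk
    have h1 : ChainLE Ls C (M ∩ N) (s + 1) :=
      chainLE_mono_n (by omega) (ht_spec s)
    exact chainLE_mono_T Set.inter_subset_left h1
  | succ k ih =>
    intro N hN hchN hk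
    by_cases hMN : M ⊆ N
    · have : N = M := hM.2 N hN.1 hMN
      exact this ▸ hchN
    · obtain ⟨q, hqM, hqN⟩ := Set.not_subset.mp hMN
      have hqC : q ∈ C := hM.1.1.1 hqM
      -- the hyperplane of N determined by q
      set Hq : Set P := {w ∈ N | Col Ls q w} with hHq
      have hHqN : Hq ⊆ N := fun w hw => hw.1
      have hHqsub : IsSubspaceIn Ls C Hq := by
        constructor
        · exact fun w hw => hN.1.1.1 hw.1
        · intro L hL x hxL y hyL hxy hx hy w hw
          exact ⟨hN.1.1.2 L hL x hxL y hyL hxy hx.1 hy.1 hw,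
            gamma hs hL.1 hxL hyL hxy hx.2 hy.2 w hw⟩
      have hmeet : ∀ L, LineIn Ls C L → L ⊆ N → ∃ w ∈ L, w ∈ Hq := by
        intro L hL hLN
        obtain ⟨w, hwL, hwq⟩ := symp_no_far hs hPS hqC hL
        exact ⟨w, hwL, hLN hwL, hwq⟩
      have hhtN : s + 1 ≤ ht Ls C N s := le_ht hrank hchN
      have hhtHq : ht Ls C N s ≤ ht Ls C Hq s + 1 :=
        hyperplane_ht hrank hHqN hHqsub hmeet
      -- the span of Hq with q
      have hXC : Hq ∪ {q} ⊆ C := by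
        intro x hx
        rcases hx with hx | hx
        · exact hN.1.1.1 hx.1
        · exact hx ▸ hqC
      have hXcl : ∀ x ∈ Hq ∪ {q}, ∀ y ∈ Hq ∪ {q}, Col Ls x y := by
        rintro x (hx | hx) y (hy | hy)
        · exact singular_col hN.1 hx.1 hy.1
        · exact hy ▸ col_symm hx.2
        · exact hx ▸ hy.2
        · exact hx ▸ hy ▸ col_refl Ls q
      have hW : IsSingularIn Ls C (SpanIn Ls C (Hq ∪ {q})) :=
        spanIn_singular hs hC hXC hXcl
      have hqnotHq : q ∉ Hq := fun h => hqN h.1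
      have hHqW : Hq ⊂ SpanIn Ls C (Hq ∪ {q}) := by
        refine ssubset_of_subset_of_ne
          (fun x hx => subset_spanIn (Set.mem_union_left _ hx)) ?_
        intro h
        exact hqnotHq (h ▸ subset_spanIn (Set.mem_union_right _ rfl))
      have hhtW : ht Ls C Hq s < ht Ls C (SpanIn Ls C (Hq ∪ {q})) s :=
        ht_lt hrank hHqW hW
      have hchW : ChainLE Ls C (SpanIn Ls C (Hq ∪ {q})) (s + 1) :=
        chainLE_mono_n (by omega) (ht_spec s)
      obtain ⟨N', hN', hWN'⟩ := exists_max_singular hrank hW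
      have hchN' : ChainLE Ls C N' (s + 1) := chainLE_mono_T hWN' hchW
      -- the intersection with M grows
      have hsubMN : M ∩ N ⊆ M ∩ N' := by
        rintro x ⟨hxM, hxN⟩
        refine ⟨hxM, hWN' (subset_spanIn (Set.mem_union_left _ ?_))⟩
        exact ⟨hxN, singular_col hM.1 hqM hxM⟩
      have hqN' : q ∈ N' := hWN' (subset_spanIn (Set.mem_union_right _ rfl))
      have hssMN : M ∩ N ⊂ M ∩ N' := by
        refine ssubset_of_subset_of_ne hsubMN ?_
        intro h
        exact hqN (Set.inter_subset_right (α := P) (h ▸ ⟨hqM, hqN'⟩ : q ∈ M ∩ N))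
      have hhtMN : ht Ls C (M ∩ N) s < ht Ls C (M ∩ N') s :=
        ht_lt hrank hssMN (singular_inter hM.1 hN'.1)
      exact ih N' hN' hchN' (by omega)

/-! ### No singular subspace of a symplecton meets every line -/

lemma no_singular_hyperplane (hs : StrongParapolar2 Ls) {C : Set P}
    (hC : IsSymp Ls C) {K : Set P} (hKC : K ⊆ C)
    (hKcl : ∀ a ∈ K, ∀ b ∈ K, Col Ls a b)
    (hKsub : ∀ L, LineIn Ls C L → ∀ u ∈ L, ∀ v ∈ L, u ≠ v → u ∈ K → v ∈ K →
      L ⊆ K)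
    (hmeet : ∀ L, LineIn Ls C L → ∃ w ∈ L, w ∈ K) : False := by
  obtain ⟨a0, b0, hab0, hscC, s, hs2, hPS⟩ := symp_spec hs hC
  have hCsub : IsSubspace Ls C := hscC.1.1
  -- a point of K and a point not collinear with it
  obtain ⟨L0, hL0⟩ := symp_has_line hs hPS hs2
  obtain ⟨z0, _, hz0K⟩ := hmeet L0 hL0
  have hz0C : z0 ∈ C := hKC hz0K
  obtain ⟨q, hqC, hnq⟩ := hPS.2.1 z0 hz0C
  have hncol : ¬ Col Ls z0 q := fun h => hnq (col_to_colIn hCsub hz0C hqC h)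
  have hnqz : ¬ Col Ls q z0 := fun h => hncol (col_symm h)
  have hqK : q ∉ K := fun h => hncol (hKcl z0 hz0K q h)
  -- the projection lemma: common neighbours of a point outside K and a
  -- non-collinear point of K lie in K
  have hperp : ∀ a ∈ C, a ∉ K → ∀ c ∈ K, ¬ Col Ls a c →
      ∀ w, Col Ls a w → Col Ls w c → w ∈ K := by
    intro a haC haK c hcK hnac w haw hwc
    have hwC : w ∈ C := hscC.1.2 a haC c (hKC hcK) hnac w haw hwc
    have hwa : w ≠ a := fun h => hnac (h ▸ hwc)
    by_cases hwK : w ∈ K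
    · exact hwK
    · exfalso
      rcases haw with heq | ⟨M, hM, haM, hwM⟩
      · exact hwa heq.symm
      · have hMC : M ⊆ C := line_subset_of_subspace hCsub hM haM hwM
          (fun h => hwa h.symm) haC hwC
        obtain ⟨t, htM, htK⟩ := hmeet M ⟨hM, hMC⟩
        have htw : w ≠ t := fun h => hwK (h ▸ htK)
        have hct : Col Ls c t := hKcl c hcK t htK
        have : ∀ u ∈ M, Col Ls c u :=
          gamma hs hM hwM htM htw (col_symm hwc) hct
        exact hnac (col_symm (this a haM))
  -- T_q, the set of points of K collinear with q
  set Tq : Set P := {w ∈ K | Col Ls q w} with hTq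
  obtain ⟨M0, hM0, hqM0⟩ := symp_pt_on_line hs hC hPS hs2 hqC
  obtain ⟨t0, ht0M0, ht0K⟩ := hmeet M0 hM0
  have ht0q : t0 ≠ q := fun h => hqK (h ▸ ht0K)
  have ht0Tq : t0 ∈ Tq := ⟨ht0K, Or.inr ⟨M0, hM0.1, hqM0, ht0M0⟩⟩
  -- the symplecton on q and z0
  obtain ⟨σ, hscσ, s', hs'2, hPSσ⟩ := hs.pps2 q z0 hnqz
  have hσsymp : IsSymp Ls σ := ⟨q, z0, hnqz, hscσ⟩
  have hσC : σ ⊆ C := hscσ.2.2.2 C hscC.1 hqC hz0C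
  have hqσ : q ∈ σ := hscσ.2.1
  have hz0σ : z0 ∈ σ := hscσ.2.2.1
  have hTqσ : Tq ⊆ σ := by
    intro t ht
    exact hscσ.1.2 q hqσ z0 hz0σ hnqz t ht.2 (hKcl t ht.1 z0 hz0K)
  -- the span W of T_q and q inside σ
  set X : Set P := Tq ∪ {q} with hX
  have hXσ : X ⊆ σ := by
    rintro x (hx | hx)
    · exact hTqσ hx
    · exact hx ▸ hqσ
  have hXcl : ∀ x ∈ X, ∀ y ∈ X, Col Ls x y := by
    rintro x (hx | hx) y (hy | hy)
    · exact hKcl x hx.1 y hy.1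
    · exact hy ▸ col_symm hx.2
    · exact hx ▸ hy.2
    · exact hx ▸ hy ▸ col_refl Ls q
  set W : Set P := SpanIn Ls σ X with hW
  have hWsing : IsSingularIn Ls σ W := spanIn_singular hs hσsymp hXσ hXcl
  have hWσ : W ⊆ σ := hWsing.1.1
  have hWcol : ∀ u ∈ W, ∀ v ∈ W, Col Ls u v := spanIn_clique hs hσsymp hXσ hXcl
  have hqW : q ∈ W := subset_spanIn (Set.mem_union_right _ rfl)
  have hTqW : Tq ⊆ W := fun t ht => subset_spanIn (Set.mem_union_left _ ht)
  -- the cross non-collinearity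
  have hcross : ∀ u ∈ W, u ∉ K → ∀ v ∈ K, v ∈ σ → v ∉ W → ¬ Col Ls u v := by
    intro u huW huK v hvK hvσ hvW hcol
    have hvTq : v ∉ Tq := fun h => hvW (hTqW h)
    have hnqv : ¬ Col Ls q v := fun h => hvTq ⟨hvK, h⟩
    exact huK (hperp q hqC hqK v hvK hnqv u (hWcol q hqW u huW) hcol)
  -- Sig = W ∪ (K ∩ σ) is a convex subspace
  set Sig : Set P := W ∪ (K ∩ σ) with hSig
  have hSigsub : IsSubspace Ls Sig := by
    constructor
    · exact fun x _ => trivial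
    · intro L hL x hxL y hyL hxy hx hy
      have hLls : L ∈ Ls := hL.1
      -- both points are in σ in every case
      have hxσ : x ∈ σ := by
        rcases hx with hx | hx
        · exact hWσ hx
        · exact hx.2
      have hyσ : y ∈ σ := by
        rcases hy with hy | hy
        · exact hWσ hy
        · exact hy.2
      have hLσ : L ⊆ σ := line_subset_of_subspace hscσ.1.1 hLls hxL hyL hxy hxσ hyσ
      have hLinσ : LineIn Ls σ L := ⟨hLls, hLσ⟩
      have hcaseW : x ∈ W → y ∈ W → L ⊆ Sig := by
        intro hxW hyW
        exact fun w hw => Or.inl (hWsing.1.2 L hLinσ x hxL y hyL hxy hxW hyW hw)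
      have hcaseK : x ∈ K → y ∈ K → L ⊆ Sig := by
        intro hxK hyK
        have hLK : L ⊆ K := hKsub L ⟨hLls, hLσ.trans hσC⟩ x hxL y hyL hxy hxK hyK
        exact fun w hw => Or.inr ⟨hLK hw, hLσ hw⟩
      rcases hx with hxW | hxK
      · rcases hy with hyW | hyK
        · exact hcaseW hxW hyW
        · by_cases hxK : x ∈ K
          · exact hcaseK hxK hyK.1
          · by_cases hyW : y ∈ W
            · exact hcaseW hxW hyW
            · exact absurd (Or.inr ⟨L, hLls, hxL, hyL⟩ : Col Ls x y)
                (hcross x hxW hxK y hyK.1 hyK.2 hyW)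
      · rcases hy with hyW | hyK
        · by_cases hyK : y ∈ K
          · exact hcaseK hxK.1 hyK
          · by_cases hxW : x ∈ W
            · exact hcaseW hxW hyW
            · exact absurd (Or.inr ⟨L, hLls, hyL, hxL⟩ : Col Ls y x)
                (hcross y hyW hyK x hxK.1 hxK.2 hxW)
        · exact hcaseK hxK.1 hyK.1
  have hSigconv : IsConvex Ls Sig := by
    refine ⟨hSigsub, ?_⟩
    intro x hx y hy hnxy z hxz hzy
    have hxσ : x ∈ σ := by
      rcases hx with hx | hx
      · exact hWσ hx
      · exact hx.2
    have hyσ : y ∈ σ := by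
      rcases hy with hy | hy
      · exact hWσ hy
      · exact hy.2
    have hzσ : z ∈ σ := hscσ.1.2 x hxσ y hyσ hnxy z hxz hzy
    rcases hx with hxW | hxK
    · rcases hy with hyW | hyK
      · exact absurd (hWcol x hxW y hyW) hnxy
      · by_cases hxK : x ∈ K
        · exact absurd (hKcl x hxK y hyK.1) hnxy
        · have hzK : z ∈ K := hperp x (hσC hxσ) hxK y hyK.1 hnxy z hxz hzy
          exact Or.inr ⟨hzK, hzσ⟩
    · rcases hy with hyW | hyK
      · by_cases hyK : y ∈ K
        · exact absurd (hKcl x hxK.1 y hyK) hnxy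
        · have hnyx : ¬ Col Ls y x := fun h => hnxy (col_symm h)
          have hzK : z ∈ K := hperp y (hσC hyσ) hyK x hxK.1 hnyx z
            (col_symm hzy) (col_symm hxz)
          exact Or.inr ⟨hzK, hzσ⟩
      · exact absurd (hKcl x hxK.1 y hyK.1) hnxy
  -- minimality of σ gives σ ⊆ W ∪ (K ∩ σ), so t0 is collinear with all of σ,
  -- contradicting non-degeneracy
  have hsigSig : σ ⊆ Sig := hscσ.2.2.2 Sig hSigconv (Or.inl hqW) (Or.inr ⟨hz0K, hz0σ⟩)
  obtain ⟨g, hgσ, hng⟩ := hPSσ.2.1 t0 (hTqσ ht0Tq)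
  have hcolg : Col Ls t0 g := by
    rcases hsigSig hgσ with hgW | hgK
    · exact hWcol t0 (hTqW ht0Tq) g hgW
    · exact hKcl t0 ht0K g hgK.1
  exact hng (col_to_colIn hscσ.1.1 (hTqσ ht0Tq) hgσ hcolg)

/-- A symplecton contained in a symplecton is equal to it. -/
lemma symp_subset_eq (hs : StrongParapolar2 Ls) {C1 C2 : Set P}
    (h1 : IsSymp Ls C1) (h2 : IsSymp Ls C2) (hsub : C1 ⊆ C2) : C1 = C2 := by
  obtain ⟨a2, b2, hab2, hsc2, s2, hs22, hPS2⟩ := symp_spec hs h2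
  refine Set.Subset.antisymm hsub ?_
  intro p hp
  by_contra hpC1
  set K : Set P := {w ∈ C1 | Col Ls p w} with hK
  have hKC : K ⊆ C1 := fun w hw => hw.1
  have hmeet : ∀ L, LineIn Ls C1 L → ∃ w ∈ L, w ∈ K := by
    intro L hL
    obtain ⟨w, hwL, hw⟩ := symp_no_far hs hPS2 hp ⟨hL.1, hL.2.trans hsub⟩
    exact ⟨w, hwL, hL.2 hwL, hw⟩
  have hKsub : ∀ L, LineIn Ls C1 L → ∀ u ∈ L, ∀ v ∈ L, u ≠ v → u ∈ K →
      v ∈ K → L ⊆ K := by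
    intro L hL u huL v hvL huv hu hv w hw
    exact ⟨hL.2 hw, gamma hs hL.1 huL hvL huv hu.2 hv.2 w hw⟩
  have hKcl : ∀ a ∈ K, ∀ b ∈ K, Col Ls a b := by
    intro a ha b hb
    by_contra hnab
    exact hpC1 ((symp_convex h1).2 a ha.1 b hb.1 hnab p (col_symm ha.2) hb.2)
  exact no_singular_hyperplane hs h1 hKC hKcl hKsub hmeet

/-! ### The Imb move -/

/-- Chains inside the common maximal singular subspace of two symplecta
transfer from one symplecton to the other. -/
lemma singular_transfer {S1 S2 : Set P} (hS1 : IsSubspace Ls S1)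
    (hS2 : IsSubspace Ls S2) (hM1 : IsSingularIn Ls S1 (S1 ∩ S2))
    (hM2 : IsSingularIn Ls S2 (S1 ∩ S2)) {T : Set P} (hT : T ⊆ S1 ∩ S2)
    (h : IsSingularIn Ls S1 T) : IsSingularIn Ls S2 T := by
  refine ⟨⟨hT.trans Set.inter_subset_right, ?_⟩, ?_⟩
  · intro L hL u huL v hvL huv hu hv
    have hLM : L ⊆ S1 ∩ S2 := hM2.1.2 L hL u huL v hvL huv (hT hu) (hT hv)
    exact h.1.2 L ⟨hL.1, hLM.trans Set.inter_subset_left⟩ u huL v hvL huv hu hv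
  · intro u hu v hv
    rcases h.2 u hu v hv with heq | ⟨L, hL, huL, hvL⟩
    · exact Or.inl heq
    · by_cases huv : u = v
      · exact Or.inl huv
      · have hLM : L ⊆ S1 ∩ S2 :=
          hM1.1.2 L hL u huL v hvL huv (hT hu) (hT hv)
        exact Or.inr ⟨L, ⟨hL.1, hLM.trans Set.inter_subset_right⟩, huL, hvL⟩

/-- The Imb move: two symplecta obtained from a point `x` and two points of
a line all of whose points are far from `x` have the same rank. -/
lemma imb_move (hΓ : ImbrexGeometry Ls) {x : P} {L : Set P} (hL : L ∈ Ls)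
    (hfar : ∀ w ∈ L, ¬ Col Ls x w) {y1 y2 : P} (hy1 : y1 ∈ L) (hy2 : y2 ∈ L)
    (hne : y1 ≠ y2) {S1 S2 : Set P} (hsc1 : SmallestConvex Ls x y1 S1)
    (hsc2 : SmallestConvex Ls x y2 S2) {s1 s2 : ℕ}
    (hPS1 : IsPolarSpace Ls S1 s1) (hPS2 : IsPolarSpace Ls S2 s2) :
    s1 = s2 := by
  have hs := hΓ.spp
  obtain ⟨hM1, hM2⟩ := hΓ.imb x L hL hfar y1 hy1 y2 hy2 hne S1 S2 hsc1 hsc2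
  have hsymp1 : IsSymp Ls S1 := ⟨x, y1, hfar y1 hy1, hsc1⟩
  have hsymp2 : IsSymp Ls S2 := ⟨x, y2, hfar y2 hy2, hsc2⟩
  have key : ∀ {A B : Set P} {sa sb : ℕ}, IsSymp Ls A → IsSymp Ls B →
      IsPolarSpace Ls A sa → IsPolarSpace Ls B sb →
      MaxSingularIn Ls A (A ∩ B) → IsSingularIn Ls B (A ∩ B) →
      IsSingularIn Ls A (A ∩ B) → sa ≤ sb := by
    intro A B sa sb hA hB hPSA hPSB hmax hsingB hsingA
    have hch : ChainLE Ls A (A ∩ B) (sa + 1) := purity hs hA hPSA hmax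
    have hch2 : ChainLE Ls B (A ∩ B) (sa + 1) := by
      obtain ⟨f, h1, h2⟩ := hch
      refine ⟨f, fun i hi => ⟨?_, (h1 i hi).2⟩, h2⟩
      exact singular_transfer (symp_subspace hA) (symp_subspace hB) hsingA
        hsingB (h1 i hi).2 (h1 i hi).1
    have := chainLE_bound hPSB.2.2.1 hch2
    omega
  have hM2' : IsSingularIn Ls S2 (S1 ∩ S2) := hM2.1
  have hM1' : IsSingularIn Ls S1 (S1 ∩ S2) := hM1.1
  have h12 : s1 ≤ s2 := key hsymp1 hsymp2 hPS1 hPS2 hM1 hM2' hM1'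
  have hM1'' : IsSingularIn Ls S1 (S2 ∩ S1) := by
    rw [Set.inter_comm]; exact hM1'
  have hM2'' : IsSingularIn Ls S2 (S2 ∩ S1) := by
    rw [Set.inter_comm]; exact hM2'
  have hM2max : MaxSingularIn Ls S2 (S2 ∩ S1) := by
    rw [Set.inter_comm]; exact hM2
  have h21 : s2 ≤ s1 := key hsymp2 hsymp1 hPS2 hPS1 hM2max hM1'' hM2''
  omega

/-! ### Comparing symplecta through a common far point -/

/-- Two symplecta over a common point `x` and collinear far points have the
same rank. -/
lemma rank_eq_of_col (hΓ : ImbrexGeometry Ls) {x y y' : P}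
    (hxy : ¬ Col Ls x y) (hxy' : ¬ Col Ls x y') (hyy' : Col Ls y y')
    (hne : y ≠ y') {σ σ' : Set P} (hsc : SmallestConvex Ls x y σ)
    (hsc' : SmallestConvex Ls x y' σ') {s s' : ℕ}
    (hPS : IsPolarSpace Ls σ s) (hPS' : IsPolarSpace Ls σ' s') : s = s' := by
  have hs := hΓ.spp
  rcases hyy' with heq | ⟨L, hL, hyL, hy'L⟩
  · exact absurd heq hne
  by_cases hfar : ∀ w ∈ L, ¬ Col Ls x w
  · exact imb_move hΓ hL hfar hyL hy'L hne hsc hsc' hPS hPS'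
  · push_neg at hfar
    obtain ⟨u, huL, hxu⟩ := hfar
    have huy : u ≠ y := fun h => hxy (h ▸ hxu)
    have huy' : u ≠ y' := fun h => hxy' (h ▸ hxu)
    have huσ' : u ∈ σ' := hsc'.1.2 x hsc'.2.1 y' hsc'.2.2.1 hxy' u hxu
      (Or.inr ⟨L, hL, huL, hy'L⟩)
    have hLσ' : L ⊆ σ' := line_subset_of_subspace hsc'.1.1 hL huL hy'L huy'
      huσ' hsc'.2.2.1
    have hyσ' : y ∈ σ' := hLσ' hyL
    have hσσ' : σ ⊆ σ' := hsc.2.2.2 σ' hsc'.1 hsc'.2.1 hyσ'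
    have heqσ : σ = σ' :=
      symp_subset_eq hs ⟨x, y, hxy, hsc⟩ ⟨x, y', hxy', hsc'⟩ hσσ'
    have h2 : HasPolarRank Ls σ s' := by rw [heqσ]; exact hPS'.2.2.1
    exact hasPolarRank_unique hPS.2.2.1 h2

/-- Two symplecta over a common point `x` and non-collinear far points have
the same rank. -/
lemma rank_eq_of_noncol (hΓ : ImbrexGeometry Ls) {x y y' : P}
    (hxy : ¬ Col Ls x y) (hxy' : ¬ Col Ls x y') (hyy' : ¬ Col Ls y y')
    {σ σ' : Set P} (hsc : SmallestConvex Ls x y σ)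
    (hsc' : SmallestConvex Ls x y' σ') {s s' : ℕ}
    (hPS : IsPolarSpace Ls σ s) (hPS' : IsPolarSpace Ls σ' s') : s = s' := by
  have hs := hΓ.spp
  obtain ⟨τ, hscτ, t, ht2, hPSτ⟩ := hs.pps2 y y' hyy'
  have hτ : IsSymp Ls τ := ⟨y, y', hyy', hscτ⟩
  by_cases hxτ : x ∈ τ
  · have hσ : σ ⊆ τ := hsc.2.2.2 τ hscτ.1 hxτ hscτ.2.1
    have hσ' : σ' ⊆ τ := hsc'.2.2.2 τ hscτ.1 hxτ hscτ.2.2.1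
    have e1 : σ = τ := symp_subset_eq hs ⟨_, _, hxy, hsc⟩ hτ hσ
    have e2 : σ' = τ := symp_subset_eq hs ⟨_, _, hxy', hsc'⟩ hτ hσ'
    have h1 : HasPolarRank Ls τ s := by rw [← e1]; exact hPS.2.2.1
    have h2 : HasPolarRank Ls τ s' := by rw [← e2]; exact hPS'.2.2.1
    exact hasPolarRank_unique h1 h2
  · set K : Set P := {w ∈ τ | Col Ls x w} with hK
    have hKC : K ⊆ τ := fun w hw => hw.1
    have hKcl : ∀ a ∈ K, ∀ b ∈ K, Col Ls a b := by
      intro a ha b hb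
      by_contra hnab
      exact hxτ (hscτ.1.2 a ha.1 b hb.1 hnab x (col_symm ha.2) hb.2)
    have hKsub : ∀ L, LineIn Ls τ L → ∀ u ∈ L, ∀ v ∈ L, u ≠ v → u ∈ K →
        v ∈ K → L ⊆ K := by
      intro L hL u huL v hvL huv hu hv w hw
      exact ⟨hL.2 hw, gamma hs hL.1 huL hvL huv hu.2 hv.2 w hw⟩
    have hnomeet : ¬ ∀ L, LineIn Ls τ L → ∃ w ∈ L, w ∈ K :=
      fun h => no_singular_hyperplane hs hτ hKC hKcl hKsub h
    push_neg at hnomeet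
    obtain ⟨Lam, hLam, hLamK⟩ := hnomeet
    have hfar : ∀ w ∈ Lam, ¬ Col Ls x w :=
      fun w hw hc => hLamK w hw ⟨hLam.2 hw, hc⟩
    obtain ⟨w1, hw1L, hyw1⟩ := symp_no_far hs hPSτ hscτ.2.1 hLam
    obtain ⟨w2, hw2L, hy'w2⟩ := symp_no_far hs hPSτ hscτ.2.2.1 hLam
    have hxw1 : ¬ Col Ls x w1 := hfar w1 hw1L
    have hxw2 : ¬ Col Ls x w2 := hfar w2 hw2L
    obtain ⟨σ1, hscσ1, t1, ht12, hPSσ1⟩ := hs.pps2 x w1 hxw1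
    obtain ⟨σ2, hscσ2, t2, ht22, hPSσ2⟩ := hs.pps2 x w2 hxw2
    have e1 : s = t1 := by
      by_cases h : y = w1
      · subst h
        have heq : σ = σ1 := smallestConvex_unique hsc hscσ1
        have h2 : HasPolarRank Ls σ t1 := by rw [heq]; exact hPSσ1.2.2.1
        exact hasPolarRank_unique hPS.2.2.1 h2
      · exact rank_eq_of_col hΓ hxy hxw1 hyw1 h hsc hscσ1 hPS hPSσ1
    have e2 : s' = t2 := by
      by_cases h : y' = w2
      · subst h
        have heq : σ' = σ2 := smallestConvex_unique hsc' hscσ2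
        have h2 : HasPolarRank Ls σ' t2 := by rw [heq]; exact hPSσ2.2.2.1
        exact hasPolarRank_unique hPS'.2.2.1 h2
      · exact rank_eq_of_col hΓ hxy' hxw2 hy'w2 h hsc' hscσ2 hPS' hPSσ2
    have e12 : t1 = t2 := by
      by_cases h : w1 = w2
      · subst h
        have heq : σ1 = σ2 := smallestConvex_unique hscσ1 hscσ2
        have h2 : HasPolarRank Ls σ1 t2 := by rw [heq]; exact hPSσ2.2.2.1
        exact hasPolarRank_unique hPSσ1.2.2.1 h2
      · exact imb_move hΓ hLam.1 hfar hw1L hw2L h hscσ1 hscσ2 hPSσ1 hPSσ2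
    omega

/-- Two symplecta over a common far point have the same rank. -/
lemma rank_eq_same_pt (hΓ : ImbrexGeometry Ls) {x y y' : P}
    (hxy : ¬ Col Ls x y) (hxy' : ¬ Col Ls x y')
    {σ σ' : Set P} (hsc : SmallestConvex Ls x y σ)
    (hsc' : SmallestConvex Ls x y' σ') {s s' : ℕ}
    (hPS : IsPolarSpace Ls σ s) (hPS' : IsPolarSpace Ls σ' s') : s = s' := by
  by_cases h : y = y'
  · subst h
    have heq : σ = σ' := smallestConvex_unique hsc hsc'
    have h2 : HasPolarRank Ls σ s' := by rw [heq]; exact hPS'.2.2.1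
    exact hasPolarRank_unique hPS.2.2.1 h2
  · by_cases hcol : Col Ls y y'
    · exact rank_eq_of_col hΓ hxy hxy' hcol h hsc hsc' hPS hPS'
    · exact rank_eq_of_noncol hΓ hxy hxy' hcol hsc hsc' hPS hPS'

/-- Two symplecta sharing a point have the same rank. -/
lemma rank_eq_shared (hΓ : ImbrexGeometry Ls) {H H' : Set P}
    (hH : IsSymp Ls H) (hH' : IsSymp Ls H') {c : P} (hc : c ∈ H)
    (hc' : c ∈ H') {s s' : ℕ} (hPS : IsPolarSpace Ls H s)
    (hPS' : IsPolarSpace Ls H' s') : s = s' := by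
  have hs := hΓ.spp
  obtain ⟨y, hyH, hny⟩ := hPS.2.1 c hc
  have hncy : ¬ Col Ls c y :=
    fun h => hny (col_to_colIn (symp_subspace hH) hc hyH h)
  obtain ⟨A, hscA, sa, _, hPSA⟩ := hs.pps2 c y hncy
  have hAH : A ⊆ H := hscA.2.2.2 H (symp_convex hH) hc hyH
  have eA : A = H := symp_subset_eq hs ⟨_, _, hncy, hscA⟩ hH hAH
  obtain ⟨y', hy'H, hny'⟩ := hPS'.2.1 c hc'
  have hncy' : ¬ Col Ls c y' :=
    fun h => hny' (col_to_colIn (symp_subspace hH') hc' hy'H h)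
  obtain ⟨A', hscA', sa', _, hPSA'⟩ := hs.pps2 c y' hncy'
  have hAH' : A' ⊆ H' := hscA'.2.2.2 H' (symp_convex hH') hc' hy'H
  have eA' : A' = H' := symp_subset_eq hs ⟨_, _, hncy', hscA'⟩ hH' hAH'
  have e0 : sa = sa' := rank_eq_same_pt hΓ hncy hncy' hscA hscA' hPSA hPSA'
  have h1 : HasPolarRank Ls H sa := by rw [← eA]; exact hPSA.2.2.1
  have h2 : HasPolarRank Ls H' sa' := by rw [← eA']; exact hPSA'.2.2.1
  have e1 : s = sa := hasPolarRank_unique hPS.2.2.1 h1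
  have e2 : s' = sa' := hasPolarRank_unique hPS'.2.2.1 h2
  omega

/-- In an imbrex geometry, all symplecta have the same polar rank. -/
theorem symps_constant_rank (Ls : Set (Set P)) (hΓ : ImbrexGeometry Ls)
    (H H' : Set P) (hH : IsSymp Ls H) (hH' : IsSymp Ls H')
    (r r' : ℕ) (hr : HasPolarRank Ls H r) (hr' : HasPolarRank Ls H' r') :
    r = r' := by
  have hs := hΓ.spp
  obtain ⟨a, b, hab, hscH, s, hs2, hPS⟩ := symp_spec hs hH
  obtain ⟨a', b', hab', hscH', s', hs'2, hPS'⟩ := symp_spec hs hH'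
  have hrs : r = s := hasPolarRank_unique hr hPS.2.2.1
  have hrs' : r' = s' := hasPolarRank_unique hr' hPS'.2.2.1
  suffices h : s = s' by omega
  by_cases hint : ∃ c, c ∈ H ∧ c ∈ H'
  · obtain ⟨c, hc, hc'⟩ := hint
    exact rank_eq_shared hΓ hH hH' hc hc' hPS hPS'
  · push_neg at hint
    have ha'H' : a' ∈ H' := hscH'.2.1
    have hnc : ∃ p, p ∈ H ∧ ¬ Col Ls p a' := by
      by_cases h1 : Col Ls a a'
      · by_cases h2 : Col Ls b a'
        · exfalso
          have : a' ∈ H := hscH.1.2 a hscH.2.1 b hscH.2.2.1 hab a' h1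
            (col_symm h2)
          exact hint a' this ha'H'
        · exact ⟨b, hscH.2.2.1, h2⟩
      · exact ⟨a, hscH.2.1, h1⟩
    obtain ⟨p, hpH, hnpa'⟩ := hnc
    obtain ⟨τ, hscτ, t, ht2, hPSτ⟩ := hs.pps2 p a' hnpa'
    have hτ : IsSymp Ls τ := ⟨p, a', hnpa', hscτ⟩
    have e1 : s = t := rank_eq_shared hΓ hH hτ hpH hscτ.2.1 hPS hPSτ
    have e2 : t = s' := rank_eq_shared hΓ hτ hH' hscτ.2.2.1 ha'H' hPSτ hPS'
    omega
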